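/- Let D be a smooth distribution on X spanned in adapted coordinates by e_a = ∂_a - Γⁿ_a ∂_n, and let g be a metric on D with components g_{ab} = g(e_a, e_b). Then the Christoffel symbols Γ^a_{bc} = ½ g^{ad}(e_b g_{cd} + e_c g_{bd} - e_d g_{bc}) define the unique intrinsic connection ∇ : ΓD × ΓD → ΓD that is metric (Z g(X,Y) = g(∇_Z X, Y) + g(X, ∇_Z Y) for X,Y,Z ∈ ΓD) and torsion-free (∇_X Y - ∇_Y X - p[X,Y] = 0, where p : TX → D is the projection), on directions tangent to D. -/

import Mathlib

/-- Algebraic model of an intrinsic connection on a distribution `D`: the module `V`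
of admissible vector fields over the ring `R` of smooth functions, with each field
acting on functions as a derivation (`act`), a projected bracket `pbr X Y = p[X,Y]`,
a fiber metric `g`, and an adapted frame `e_a` with `p[e_a, e_b] = 0`.  The Christoffel
symbols `Γ^a_{bc} = ½ g^{ad}(e_b g_{cd} + e_c g_{bd} - e_d g_{bc})` define the unique
intrinsic connection that is metric and torsion-free. -/
theorem stmt_10 {R V ι : Type*} [CommRing R] [Algebra ℝ R]
    [AddCommGroup V] [Module R V] [Fintype ι] [DecidableEq ι]
    (act : V → R → R)
    (hact_smul : ∀ (f : R) (X : V) (r : R), act (f • X) r = f * act X r)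
    (hact_addX : ∀ (X Y : V) (r : R), act (X + Y) r = act X r + act Y r)
    (hact_add : ∀ X r s, act X (r + s) = act X r + act X s)
    (hact_mul : ∀ X r s, act X (r * s) = act X r * s + r * act X s)
    (g : V → V → R) (hgsym : ∀ X Y, g X Y = g Y X)
    (hg_addl : ∀ X Y Z, g (X + Y) Z = g X Z + g Y Z)
    (hg_smull : ∀ (f : R) X Y, g (f • X) Y = f * g X Y)
    (hg_nd : ∀ X, (∀ Y, g X Y = 0) → X = 0)
    (pbr : V → V → V) (hpbr_anti : ∀ X Y, pbr X Y = -pbr Y X)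
    (hpbr_addl : ∀ X Y Z, pbr (X + Y) Z = pbr X Z + pbr Y Z)
    (hpbr_leib : ∀ (f : R) X Y, pbr (f • X) Y = f • pbr X Y - act Y f • X)
    (e : ι → V)
    (hspan : ∀ X : V, ∃ f : ι → R, X = ∑ a, f a • e a)
    (hbr_e : ∀ b c, pbr (e b) (e c) = 0)
    (G : ι → ι → R) (hG : ∀ a b, G a b = g (e a) (e b))
    (Ginv : ι → ι → R)
    (hGinv : ∀ a b, (∑ d, Ginv a d * G d b) = if a = b then 1 else 0) :
    ∃! nabla : V → V → V,
      (∀ (f : R) (X Y : V), nabla (f • X) Y = f • nabla X Y) ∧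
      (∀ (X Y Z : V), nabla (X + Y) Z = nabla X Z + nabla Y Z) ∧
      (∀ (X Y Z : V), nabla X (Y + Z) = nabla X Y + nabla X Z) ∧
      (∀ (f : R) (X Y : V), nabla X (f • Y) = f • nabla X Y + act X f • Y) ∧
      (∀ X Y Z, act Z (g X Y) = g (nabla Z X) Y + g X (nabla Z Y)) ∧
      (∀ X Y, nabla X Y - nabla Y X - pbr X Y = 0) ∧
      (∀ b c, nabla (e b) (e c) =
        ∑ a, (algebraMap ℝ R (1 / 2) *
          ∑ d, Ginv a d * (act (e b) (G c d) + act (e c) (G b d) - act (e d) (G b c)))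
          • e a) := by 
  classical
  -- derived linearity facts for g
  have hg_addr : ∀ (X Y Z : V), g X (Y + Z) = g X Y + g X Z := by
    intro X Y Z; rw [hgsym, hg_addl, hgsym Y X, hgsym Z X]
  have hg_smulr : ∀ (f : R) (X Y : V), g X (f • Y) = f * g X Y := by
    intro f X Y; rw [hgsym, hg_smull, hgsym Y X]
  have g_sumr : ∀ (X : V) (F : ι → V), g X (∑ a, F a) = ∑ a, g X (F a) := fun X F =>
    map_sum (AddMonoidHom.mk' (g X) (fun Y Z => hg_addr X Y Z)) F Finset.univ
  have g_suml : ∀ (F : ι → V) (Y : V), g (∑ a, F a) Y = ∑ a, g (F a) Y := fun F Y =>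
    map_sum (AddMonoidHom.mk' (fun X => g X Y) (fun X Z => hg_addl X Z Y)) F Finset.univ
  have act_sumX : ∀ (F : ι → V) (r : R), act (∑ a, F a) r = ∑ a, act (F a) r := fun F r =>
    map_sum (AddMonoidHom.mk' (fun X => act X r) (fun X Y => hact_addX X Y r)) F Finset.univ
  have act_sumr : ∀ (X : V) (F : ι → R), act X (∑ a, F a) = ∑ a, act X (F a) := fun X F =>
    map_sum (AddMonoidHom.mk' (act X) (hact_add X)) F Finset.univ
  have act1 : ∀ X : V, act X 1 = 0 := by
    intro X
    have h := hact_mul X 1 1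
    simp only [mul_one, one_mul] at h
    exact right_eq_add.mp h
  have act0 : ∀ X : V, act X 0 = 0 := by
    intro X
    have h := hact_add X 0 0
    simp only [add_zero] at h
    exact right_eq_add.mp h
  have act_ite : ∀ (X : V) (P : Prop) [Decidable P],
      act X (if P then (1 : R) else 0) = 0 := by
    intro X P _
    split
    · exact act1 X
    · exact act0 X
  have hGsym : ∀ a b, G a b = G b a := by
    intro a b; rw [hG, hG, hgsym]
  -- the transposed inverse relation
  have hGG : ∀ a b, (∑ d, G a d * Ginv d b) = if a = b then 1 else 0 := by
    have hAB : (Matrix.of Ginv : Matrix ι ι R) * Matrix.of G = 1 := by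
      ext a b
      rw [Matrix.mul_apply, Matrix.one_apply]
      simpa using hGinv a b
    have hBA := mul_eq_one_comm.mp hAB
    intro a b
    have h := congrFun (congrFun hBA a) b
    rw [Matrix.mul_apply, Matrix.one_apply] at h
    simpa using h
  -- coordinates with respect to the frame
  obtain ⟨κ, hκdef⟩ : ∃ κ : V → ι → R, κ = fun X a => ∑ b, Ginv a b * g (e b) X := ⟨_, rfl⟩
  have κ_e : ∀ a b, κ (e b) a = if a = b then 1 else 0 := by
    intro a b
    simp only [hκdef, ← hG]
    exact hGinv a b
  have κ_add : ∀ (X Y : V) (a : ι), κ (X + Y) a = κ X a + κ Y a := by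
    intro X Y a
    simp only [hκdef, hg_addr, mul_add, Finset.sum_add_distrib]
  have κ_smul : ∀ (f : R) (X : V) (a : ι), κ (f • X) a = f * κ X a := by
    intro f X a
    simp only [hκdef, hg_smulr, Finset.mul_sum]
    exact Finset.sum_congr rfl fun b _ => by ring
  have κ_repr : ∀ X : V, ∑ a, κ X a • e a = X := by
    intro X
    obtain ⟨f, hf⟩ := hspan X
    have hcoef : ∀ a, κ X a = f a := by
      intro a
      rw [hκdef]
      calc (∑ b, Ginv a b * g (e b) X)
          = ∑ b, Ginv a b * ∑ c, f c * G b c := by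
            refine Finset.sum_congr rfl fun b _ => ?_
            rw [hf, g_sumr]
            congr 1
            exact Finset.sum_congr rfl fun c _ => by rw [hg_smulr, hG]
        _ = ∑ c, f c * ∑ b, Ginv a b * G b c := by
            simp only [Finset.mul_sum]
            rw [Finset.sum_comm]
            exact Finset.sum_congr rfl fun c _ => Finset.sum_congr rfl fun b _ => by ring
        _ = f a := by
            simp only [hGinv]
            simp [mul_ite, Finset.sum_ite_eq]
    rw [Finset.sum_congr rfl fun a _ => by rw [hcoef a], ← hf]
  obtain ⟨L, hLdef⟩ : ∃ L : ι → ι → ι → R, L = fun b c d =>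
    act (e b) (G c d) + act (e c) (G b d) - act (e d) (G b c) := ⟨_, rfl⟩
  obtain ⟨Γ, hΓdef⟩ : ∃ Γ : ι → ι → ι → R, Γ = fun a b c =>
    algebraMap ℝ R (1 / 2) * ∑ d, Ginv a d * L b c d := ⟨_, rfl⟩
  have Γsym : ∀ a b c, Γ a b c = Γ a c b := by
    intro a b c
    simp only [hΓdef]
    congr 1
    refine Finset.sum_congr rfl fun d _ => ?_
    simp only [hLdef]
    rw [hGsym c b]
    ring
  have Γcontr : ∀ b c d, (∑ a, Γ a b c * G a d) = algebraMap ℝ R (1 / 2) * L b c d := by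
    intro b c d
    calc (∑ a, Γ a b c * G a d)
        = ∑ a, ∑ x, algebraMap ℝ R (1 / 2) * (G d a * Ginv a x * L b c x) := by
          refine Finset.sum_congr rfl fun a _ => ?_
          simp only [hΓdef, Finset.mul_sum, Finset.sum_mul]
          refine Finset.sum_congr rfl fun x _ => ?_
          rw [hGsym a d]; ring
      _ = ∑ x, algebraMap ℝ R (1 / 2) * ((∑ a, G d a * Ginv a x) * L b c x) := by
          rw [Finset.sum_comm]
          refine Finset.sum_congr rfl fun x _ => ?_
          simp only [Finset.mul_sum, Finset.sum_mul]
      _ = algebraMap ℝ R (1 / 2) * L b c d := by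
          simp only [hGG]
          simp [ite_mul, mul_ite, Finset.sum_ite_eq]
  have half2 : algebraMap ℝ R (1 / 2) + algebraMap ℝ R (1 / 2) = 1 := by
    rw [← map_add]
    norm_num
  have Lmet : ∀ a b c,
      algebraMap ℝ R (1 / 2) * L a b c + algebraMap ℝ R (1 / 2) * L a c b
        = act (e a) (G b c) := by
    intro a b c
    simp only [hLdef]
    rw [hGsym c b]
    linear_combination (act (e a) (G b c)) * half2
  obtain ⟨nab, hnab⟩ : ∃ nab : V → V → V, nab = fun X Y =>
    (∑ c, act X (κ Y c) • e c) + ∑ a, (∑ b, ∑ c, κ X b * κ Y c * Γ a b c) • e a := ⟨_, rfl⟩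
  have p1 : ∀ (f : R) (X Y : V), nab (f • X) Y = f • nab X Y := by
    intro f X Y
    simp only [hnab, hact_smul, κ_smul, smul_add, Finset.smul_sum, smul_smul]
    congr 1
    refine Finset.sum_congr rfl fun a _ => ?_
    congr 1
    simp only [Finset.mul_sum]
    refine Finset.sum_congr rfl fun b _ => Finset.sum_congr rfl fun c _ => by ring
  have p2 : ∀ (X Y Z : V), nab (X + Y) Z = nab X Z + nab Y Z := by
    intro X Y Z
    simp only [hnab, hact_addX, κ_add, add_smul, add_mul, Finset.sum_add_distrib]
    abel
  have p3 : ∀ (X Y Z : V), nab X (Y + Z) = nab X Y + nab X Z := by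
    intro X Y Z
    simp only [hnab, hact_add, κ_add, mul_add, add_mul, add_smul, Finset.sum_add_distrib]
    abel
  have p4 : ∀ (f : R) (X Y : V), nab X (f • Y) = f • nab X Y + act X f • Y := by
    intro f X Y
    have key : ∑ c, (act X f * κ Y c) • e c = act X f • Y := by
      conv_rhs => rw [← κ_repr Y]
      rw [Finset.smul_sum]
      exact Finset.sum_congr rfl fun c _ => by rw [smul_smul]
    calc nab X (f • Y)
        = (∑ c, ((act X f * κ Y c) • e c + (f * act X (κ Y c)) • e c))
            + ∑ a, (f * (∑ b, ∑ c, κ X b * κ Y c * Γ a b c)) • e a := by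
          simp only [hnab, κ_smul, hact_mul, add_smul]
          congr 1
          refine Finset.sum_congr rfl fun a _ => ?_
          congr 1
          simp only [Finset.mul_sum]
          refine Finset.sum_congr rfl fun b _ => Finset.sum_congr rfl fun c _ => by ring
      _ = f • nab X Y + act X f • Y := by
          simp only [Finset.sum_add_distrib, key, hnab, smul_add, Finset.smul_sum, smul_smul]
          abel
  have p7 : ∀ b c, nab (e b) (e c) = ∑ a, Γ a b c • e a := by
    intro b c
    simp only [hnab, κ_e, act_ite, zero_smul, Finset.sum_const_zero, zero_add]
    refine Finset.sum_congr rfl fun a _ => ?_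
    congr 1
    simp [ite_mul, Finset.sum_ite_eq']
  -- metric compatibility
  have hbasis5 : ∀ a b c, g (nab (e a) (e b)) (e c) = algebraMap ℝ R (1 / 2) * L a b c := by
    intro a b c
    rw [p7, g_suml]
    calc (∑ x, g (Γ x a b • e x) (e c))
        = ∑ x, Γ x a b * G x c := by
          refine Finset.sum_congr rfl fun x _ => ?_
          rw [hg_smull, hG]
      _ = algebraMap ℝ R (1 / 2) * L a b c := Γcontr a b c
  obtain ⟨T, hT⟩ : ∃ T : V → V → V → R, T = fun Z X Y =>
    g (nab Z X) Y + g X (nab Z Y) - act Z (g X Y) := ⟨_, rfl⟩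
  have Tbasis : ∀ a b c, T (e a) (e b) (e c) = 0 := by
    intro a b c
    simp only [hT]
    rw [hgsym (e b) (nab (e a) (e c)), hbasis5, hbasis5, ← hG b c]
    linear_combination Lmet a b c
  have Tadd1 : ∀ (Z Z' X Y : V), T (Z + Z') X Y = T Z X Y + T Z' X Y := by
    intro Z Z' X Y
    simp only [hT, p2, hg_addl, hg_addr, hact_addX]
    ring
  have Tsmul1 : ∀ (f : R) (Z X Y : V), T (f • Z) X Y = f * T Z X Y := by
    intro f Z X Y
    simp only [hT, p1, hg_smull, hg_smulr, hact_smul]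
    ring
  have Tadd2 : ∀ (Z X X' Y : V), T Z (X + X') Y = T Z X Y + T Z X' Y := by
    intro Z X X' Y
    simp only [hT, p3, hg_addl, hg_addr, hact_add]
    ring
  have Tsmul2 : ∀ (f : R) (Z X Y : V), T Z (f • X) Y = f * T Z X Y := by
    intro f Z X Y
    simp only [hT, p4, hg_addl, hg_smull, hg_smulr, hact_mul]
    ring
  have Tadd3 : ∀ (Z X Y Y' : V), T Z X (Y + Y') = T Z X Y + T Z X Y' := by
    intro Z X Y Y'
    simp only [hT, p3, hg_addl, hg_addr, hact_add]
    ring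
  have Tsmul3 : ∀ (f : R) (Z X Y : V), T Z X (f • Y) = f * T Z X Y := by
    intro f Z X Y
    simp only [hT, p4, hg_addr, hg_smull, hg_smulr, hact_mul]
    ring
  have Texp1 : ∀ (Z X Y : V), T Z X Y = ∑ a, κ Z a * T (e a) X Y := by
    intro Z X Y
    calc T Z X Y = T (∑ a, κ Z a • e a) X Y := by rw [κ_repr Z]
      _ = ∑ a, T (κ Z a • e a) X Y :=
          map_sum (AddMonoidHom.mk' (fun W => T W X Y) (fun A B => Tadd1 A B X Y)) _ _
      _ = ∑ a, κ Z a * T (e a) X Y := Finset.sum_congr rfl fun a _ => Tsmul1 _ _ _ _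
  have Texp2 : ∀ (Z X Y : V), T Z X Y = ∑ b, κ X b * T Z (e b) Y := by
    intro Z X Y
    calc T Z X Y = T Z (∑ b, κ X b • e b) Y := by rw [κ_repr X]
      _ = ∑ b, T Z (κ X b • e b) Y :=
          map_sum (AddMonoidHom.mk' (fun W => T Z W Y) (fun A B => Tadd2 Z A B Y)) _ _
      _ = ∑ b, κ X b * T Z (e b) Y := Finset.sum_congr rfl fun b _ => Tsmul2 _ _ _ _
  have Texp3 : ∀ (Z X Y : V), T Z X Y = ∑ c, κ Y c * T Z X (e c) := by
    intro Z X Y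
    calc T Z X Y = T Z X (∑ c, κ Y c • e c) := by rw [κ_repr Y]
      _ = ∑ c, T Z X (κ Y c • e c) :=
          map_sum (AddMonoidHom.mk' (fun W => T Z X W) (fun A B => Tadd3 Z X A B)) _ _
      _ = ∑ c, κ Y c * T Z X (e c) := Finset.sum_congr rfl fun c _ => Tsmul3 _ _ _ _
  have p5 : ∀ X Y Z, act Z (g X Y) = g (nab Z X) Y + g X (nab Z Y) := by
    intro X Y Z
    have hT0 : T Z X Y = 0 := by
      rw [Texp1]
      refine Finset.sum_eq_zero fun a _ => ?_
      have h2 : T (e a) X Y = 0 := by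
        rw [Texp2]
        refine Finset.sum_eq_zero fun b _ => ?_
        have h3 : T (e a) (e b) Y = 0 := by
          rw [Texp3]
          refine Finset.sum_eq_zero fun c _ => ?_
          rw [Tbasis]
          ring
        rw [h3]; ring
      rw [h2]; ring
    simp only [hT] at hT0
    linear_combination -hT0
  -- torsion freeness
  obtain ⟨S, hS⟩ : ∃ S : V → V → V, S = fun X Y =>
    nab X Y - nab Y X - pbr X Y := ⟨_, rfl⟩
  have Sbasis : ∀ b c, S (e b) (e c) = 0 := by
    intro b c
    simp only [hS]
    rw [p7, p7, hbr_e, sub_zero,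
      Finset.sum_congr rfl fun a (_ : a ∈ Finset.univ) => by rw [Γsym a b c]]
    exact sub_self _
  have Santi : ∀ X Y, S X Y = -S Y X := by
    intro X Y
    simp only [hS]
    rw [hpbr_anti X Y]
    abel
  have Sadd1 : ∀ X X' Y, S (X + X') Y = S X Y + S X' Y := by
    intro X X' Y
    simp only [hS, p2, p3, hpbr_addl]
    abel
  have Ssmul1 : ∀ (f : R) X Y, S (f • X) Y = f • S X Y := by
    intro f X Y
    simp only [hS, p1, p4, hpbr_leib, smul_sub]
    abel
  have Sexp1 : ∀ X Y, S X Y = ∑ a, κ X a • S (e a) Y := by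
    intro X Y
    calc S X Y = S (∑ a, κ X a • e a) Y := by rw [κ_repr X]
      _ = ∑ a, S (κ X a • e a) Y :=
          map_sum (AddMonoidHom.mk' (fun W => S W Y) (fun A B => Sadd1 A B Y)) _ _
      _ = ∑ a, κ X a • S (e a) Y := Finset.sum_congr rfl fun a _ => Ssmul1 _ _ _
  have p6 : ∀ X Y, nab X Y - nab Y X - pbr X Y = 0 := by
    intro X Y
    have h0 : S X Y = 0 := by
      rw [Sexp1]
      refine Finset.sum_eq_zero fun a _ => ?_
      have h1 : S (e a) Y = 0 := by
        rw [Santi, Sexp1]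
        rw [Finset.sum_congr rfl fun b (_ : b ∈ Finset.univ) => by rw [Sbasis b a]]
        simp
      rw [h1, smul_zero]
    simpa [hS] using h0
  -- the basis formula in the literal form of the statement
  have p7' : ∀ b c, nab (e b) (e c) =
      ∑ a, (algebraMap ℝ R (1 / 2) *
        ∑ d, Ginv a d * (act (e b) (G c d) + act (e c) (G b d) - act (e d) (G b c)))
        • e a := by
    intro b c
    rw [p7]
    exact Finset.sum_congr rfl fun a _ => by rw [hΓdef, hLdef]
  -- uniqueness expansion
  have expand : ∀ N : V → V → V,
      (∀ (f : R) (X Y : V), N (f • X) Y = f • N X Y) →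
      (∀ (X Y Z : V), N (X + Y) Z = N X Z + N Y Z) →
      (∀ (X Y Z : V), N X (Y + Z) = N X Y + N X Z) →
      (∀ (f : R) (X Y : V), N X (f • Y) = f • N X Y + act X f • Y) →
      ∀ X Y, N X Y =
        ∑ a, κ X a • ∑ c, (κ Y c • N (e a) (e c) + act (e a) (κ Y c) • e c) := by
    intro N h1 h2 h3 h4 X Y
    calc N X Y = N (∑ a, κ X a • e a) Y := by rw [κ_repr]
      _ = ∑ a, N (κ X a • e a) Y :=
          map_sum (AddMonoidHom.mk' (fun W => N W Y) (fun A B => h2 A B Y)) _ _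
      _ = ∑ a, κ X a • N (e a) Y := Finset.sum_congr rfl fun a _ => h1 _ _ _
      _ = ∑ a, κ X a • N (e a) (∑ c, κ Y c • e c) := by
          conv_lhs => rw [← κ_repr Y]
      _ = ∑ a, κ X a • ∑ c, N (e a) (κ Y c • e c) :=
          Finset.sum_congr rfl fun a _ =>
            congrArg _ (map_sum (AddMonoidHom.mk' (N (e a)) (h3 (e a))) _ _)
      _ = ∑ a, κ X a • ∑ c, (κ Y c • N (e a) (e c) + act (e a) (κ Y c) • e c) :=
          Finset.sum_congr rfl fun a _ =>
            congrArg _ (Finset.sum_congr rfl fun c _ => h4 _ _ _)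
  refine ⟨nab, ⟨p1, p2, p3, p4, p5, p6, p7'⟩, ?_⟩
  rintro nab' ⟨q1, q2, q3, q4, -, -, q7⟩
  funext X Y
  rw [expand nab' q1 q2 q3 q4 X Y, expand nab p1 p2 p3 p4 X Y]
  refine Finset.sum_congr rfl fun a _ => congrArg _ ?_
  refine Finset.sum_congr rfl fun c _ => ?_
  rw [q7, p7']
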